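/- arXiv:2601.06036 — 3 statements merged into one kernel-verified Lean document; each statement's English description precedes it below -/
import Mathlib

section
/- Let u ∈ ℝ^N with u(D,x) = 1 if x = max D and 0 otherwise. Then the Möbius transform b = Ku satisfies b(D,x) = 1 if D = {0,1,...,x} and b(D,x) = 0 otherwise. -/
open Finset

/-- Möbius operator. -/
noncomputable def Kop (n : ℕ) (ρ : Finset (Fin n) → Fin n → ℝ)
    (D : Finset (Fin n)) (x : Fin n) : ℝ :=
  ∑ E ∈ univ.filter (fun E => D ⊆ E), (-1 : ℝ) ^ (E \ D).card * ρ E x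

/-- `u(D,x) = 1` if `x = max D` and `0` otherwise. -/
noncomputable def uVec (n : ℕ) (D : Finset (Fin n)) (x : Fin n) : ℝ :=
  if h : D.Nonempty then (if x = D.max' h then 1 else 0) else 0

lemma sum_powerset_neg_one_pow_card_real {α : Type*} [DecidableEq α] {s : Finset α} :
    (∑ m ∈ s.powerset, (-1 : ℝ) ^ m.card) = if s = ∅ then 1 else 0 := by
  have h := Finset.sum_powerset_neg_one_pow_card (x := s)
  have : ((∑ m ∈ s.powerset, (-1 : ℤ) ^ m.card : ℤ) : ℝ)
      = ∑ m ∈ s.powerset, (-1 : ℝ) ^ m.card := by push_cast; ring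
  rw [← this, h]
  split <;> norm_num

/-- The Möbius transform `b = Ku` satisfies `b(D,x) = 1` if `D = {0,1,…,x}`
and `b(D,x) = 0` otherwise. -/
theorem Kop_uVec (n : ℕ) (D : Finset (Fin n)) (x : Fin n) (hx : x ∈ D) :
    Kop n (uVec n) D x = if D = Finset.Iic x then 1 else 0 := by
  classical
  have hmax : ∀ E : Finset (Fin n), D ⊆ E →
      uVec n E x = if E ⊆ Finset.Iic x then 1 else 0 := by
    intro E hDE
    have hxE : x ∈ E := hDE hx
    have hne : E.Nonempty := ⟨x, hxE⟩
    rw [uVec, dif_pos hne]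
    congr 1
    simp only [eq_iff_iff]
    constructor
    · intro h y hy
      rw [Finset.mem_Iic]
      exact h ▸ Finset.le_max' E y hy
    · intro h
      refine le_antisymm (Finset.le_max' E x hxE) ?_
      exact Finset.mem_Iic.mp (h (E.max'_mem hne))
  unfold Kop
  rw [Finset.sum_congr rfl (fun E hE => by
    rw [hmax E (Finset.mem_filter.mp hE).2])]
  simp only [mul_ite, mul_one, mul_zero]
  rw [Finset.sum_ite, Finset.sum_const_zero, add_zero]
  by_cases hD : D ⊆ Finset.Iic x
  · rw [show ((univ.filter fun E => D ⊆ E).filter fun E => E ⊆ Finset.Iic x) =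
        ((Finset.Iic x \ D).powerset.image fun t => D ∪ t) from ?_]
    · rw [Finset.sum_image ?inj]
      case inj =>
        intro s hs t ht h
        have hs' := Finset.mem_powerset.mp hs
        have ht' := Finset.mem_powerset.mp ht
        have : ∀ a : Finset (Fin n), a ⊆ Finset.Iic x \ D → (D ∪ a) \ D = a := by
          intro a ha
          rw [Finset.union_sdiff_left]
          exact Finset.sdiff_eq_self_of_disjoint
            (Finset.disjoint_left.mpr fun {y} hy => (Finset.mem_sdiff.mp (ha hy)).2)
        calc s = (D ∪ s) \ D := (this s hs').symm
          _ = (D ∪ t) \ D := by rw [show D ∪ s = D ∪ t from h]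
          _ = t := this t ht'
      have : ∀ t ∈ (Finset.Iic x \ D).powerset,
          (-1 : ℝ) ^ ((D ∪ t) \ D).card = (-1 : ℝ) ^ t.card := by
        intro t ht
        have ht' := Finset.mem_powerset.mp ht
        rw [Finset.union_sdiff_left, Finset.sdiff_eq_self_of_disjoint
          (Finset.disjoint_left.mpr fun {y} hy => (Finset.mem_sdiff.mp (ht' hy)).2)]
      rw [Finset.sum_congr rfl this, sum_powerset_neg_one_pow_card_real]
      have : D = Finset.Iic x ↔ Finset.Iic x \ D = ∅ := by
        rw [Finset.sdiff_eq_empty_iff_subset]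
        exact ⟨fun h => h ▸ le_refl _, fun h => Finset.Subset.antisymm hD h⟩
      simp [this]
    · ext E
      simp only [Finset.mem_filter, Finset.mem_univ, true_and, Finset.mem_image,
        Finset.mem_powerset]
      constructor
      · rintro ⟨h1, h2⟩
        exact ⟨E \ D, fun y hy => Finset.mem_sdiff.mpr
          ⟨h2 (Finset.mem_sdiff.mp hy).1, (Finset.mem_sdiff.mp hy).2⟩,
          by rw [Finset.union_sdiff_of_subset h1]⟩
      · rintro ⟨t, ht, rfl⟩
        exact ⟨Finset.subset_union_left, Finset.union_subset hD
          (fun y hy => (Finset.mem_sdiff.mp (ht hy)).1)⟩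
  · have h1 : ((univ.filter fun E => D ⊆ E).filter fun E => E ⊆ Finset.Iic x) = ∅ := by
      rw [Finset.filter_eq_empty_iff]
      intro E hE hEx
      exact hD ((Finset.mem_filter.mp hE).2.trans hEx)
    have h2 : D ≠ Finset.Iic x := fun h => hD (h ▸ le_refl _)
    simp [h1, h2]
end

section
/- A vector ρ ∈ ℝ^N satisfies the normalization constraint Σ_{x ∈ D} ρ(D,x) = 1 for every nonempty D ⊆ X if and only if κ = Kρ is a flow on the Boolean lattice graph 𝒢 with total flow 1, i.e., for every vertex D ∉ {∅, X}: Σ_{x ∈ D} κ(D,x) = Σ_{y ∉ D} κ(D ∪ {y}, y), and Σ_{x ∈ X} κ(X,x) = 1. -/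
open Finset

/-- Flow conservation on the Boolean lattice graph: for every vertex
`D ∉ {∅, X}`, `∑_{x ∈ D} κ(D,x) = ∑_{y ∉ D} κ(D ∪ {y}, y)`. -/
def IsFlow (n : ℕ) (κ : Finset (Fin n) → Fin n → ℝ) : Prop :=
  ∀ D : Finset (Fin n), D ≠ ∅ → D ≠ univ →
    ∑ x ∈ D, κ D x = ∑ y ∈ Dᶜ, κ (insert y D) y

noncomputable def sg (n : ℕ) (ρ : Finset (Fin n) → Fin n → ℝ) (D : Finset (Fin n)) : ℝ :=
  ∑ x ∈ D, ρ D x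

noncomputable def fm (n : ℕ) (ρ : Finset (Fin n) → Fin n → ℝ) (D : Finset (Fin n)) : ℝ :=
  ∑ E ∈ univ.filter (fun E => D ⊆ E), (-1 : ℝ) ^ (E \ D).card * sg n ρ E

lemma alt_real {α : Type*} [DecidableEq α] (s : Finset α) :
    (∑ m ∈ s.powerset, (-1 : ℝ) ^ m.card) = if s = ∅ then 1 else 0 := by
  have h := Finset.sum_powerset_neg_one_pow_card (x := s)
  have : ((∑ m ∈ s.powerset, (-1 : ℤ) ^ m.card : ℤ) : ℝ)
      = ∑ m ∈ s.powerset, (-1 : ℝ) ^ m.card := by push_cast; ring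
  rw [← this, h]
  split <;> norm_num

/-- reindex a sum over supersets of `D` by subsets of `Dᶜ`. -/
lemma sum_superset_eq {n : ℕ} (D : Finset (Fin n)) (g : Finset (Fin n) → ℝ) :
    ∑ E ∈ univ.filter (fun E => D ⊆ E), g E = ∑ A ∈ Dᶜ.powerset, g (D ∪ A) := by
  refine Finset.sum_nbij' (fun E => E \ D) (fun A => D ∪ A) ?_ ?_ ?_ ?_ ?_
  · intro E hE
    simp only [mem_powerset]
    intro x hx
    simp only [mem_sdiff] at hx
    simp [hx.2]
  · intro A hA
    simp
  · intro E hE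
    simp only [mem_filter, mem_univ, true_and] at hE
    exact Finset.union_sdiff_of_subset hE
  · intro A hA
    simp only [mem_powerset] at hA
    apply Finset.union_sdiff_cancel_left
    rw [Finset.disjoint_left]
    intro x hxD hxA
    have := hA hxA
    simp only [mem_compl] at this
    exact this hxD
  · intro E hE
    simp only [mem_filter, mem_univ, true_and] at hE
    rw [Finset.union_sdiff_of_subset hE]

lemma fm_eq {n : ℕ} (ρ : Finset (Fin n) → Fin n → ℝ) (D : Finset (Fin n)) :
    fm n ρ D = ∑ A ∈ Dᶜ.powerset, (-1 : ℝ) ^ A.card * sg n ρ (D ∪ A) := by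
  rw [fm, sum_superset_eq D (fun E => (-1 : ℝ) ^ (E \ D).card * sg n ρ E)]
  refine Finset.sum_congr rfl fun A hA => ?_
  simp only [mem_powerset] at hA
  have hd : Disjoint D A := by
    rw [Finset.disjoint_left]
    intro x hxD hxA
    have := hA hxA
    simp only [mem_compl] at this
    exact this hxD
  rw [Finset.union_sdiff_cancel_left hd]

lemma Kop_univ {n : ℕ} (ρ : Finset (Fin n) → Fin n → ℝ) (x : Fin n) :
    Kop n ρ univ x = ρ univ x := by
  rw [Kop]
  have : (univ.filter (fun E : Finset (Fin n) => univ ⊆ E)) = {univ} := by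
    ext E; simp [univ_subset_iff]
  rw [this]
  simp

lemma fm_univ {n : ℕ} (ρ : Finset (Fin n) → Fin n → ℝ) :
    fm n ρ univ = sg n ρ univ := by
  rw [fm]
  have : (univ.filter (fun E : Finset (Fin n) => univ ⊆ E)) = {univ} := by
    ext E; simp [univ_subset_iff]
  rw [this]
  simp

/-- key identity: the in/out flow difference at `D` equals the Möbius transform of `σ`. -/
lemma flow_diff {n : ℕ} (ρ : Finset (Fin n) → Fin n → ℝ) (D : Finset (Fin n)) :
    ∑ x ∈ D, Kop n ρ D x = fm n ρ D + ∑ y ∈ Dᶜ, Kop n ρ (insert y D) y := by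
  have hrhs : ∑ y ∈ Dᶜ, Kop n ρ (insert y D) y
      = ∑ E ∈ univ.filter (fun E => D ⊆ E), ∑ y ∈ E \ D,
          (-1 : ℝ) ^ (E \ insert y D).card * ρ E y := by
    simp only [Kop]
    refine Finset.sum_comm' (s := Dᶜ)
      (t := fun y => univ.filter (fun E => insert y D ⊆ E))
      (s' := fun E => E \ D)
      (t' := univ.filter (fun E => D ⊆ E)) (fun y E => ?_)
    constructor
    · rintro ⟨hy, hE⟩
      simp only [mem_filter, mem_univ, true_and, mem_compl] at *
      constructor
      · simp only [mem_sdiff]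
        exact ⟨(Finset.insert_subset_iff.mp hE).1, hy⟩
      · exact (Finset.insert_subset_iff.mp hE).2
    · rintro ⟨hy, hE⟩
      simp only [mem_filter, mem_univ, true_and, mem_compl] at *
      simp only [mem_sdiff] at hy
      exact ⟨hy.2, Finset.insert_subset hy.1 hE⟩
  rw [hrhs]
  have hstep : ∀ E ∈ univ.filter (fun E => D ⊆ E),
      ∑ y ∈ E \ D, (-1 : ℝ) ^ (E \ insert y D).card * ρ E y
      = -((-1 : ℝ) ^ (E \ D).card * ∑ y ∈ E \ D, ρ E y) := by
    intro E hE
    simp only [mem_filter, mem_univ, true_and] at hE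
    rw [Finset.mul_sum, ← Finset.sum_neg_distrib]
    refine Finset.sum_congr rfl fun y hy => ?_
    simp only [mem_sdiff] at hy
    have h1 : E \ insert y D = (E \ D).erase y := by
      ext z; simp only [mem_sdiff, mem_insert, mem_erase]; tauto
    have hy' : y ∈ E \ D := by simp [mem_sdiff, hy.1, hy.2]
    have hc : (E \ D).card = ((E \ D).erase y).card + 1 := by
      rw [Finset.card_erase_of_mem hy']
      have : 1 ≤ (E \ D).card := Finset.card_pos.mpr ⟨y, hy'⟩
      omega
    rw [h1, hc, pow_succ]
    ring
  rw [Finset.sum_congr rfl hstep, fm]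
  simp only [Kop]
  rw [Finset.sum_comm, ← Finset.sum_add_distrib]
  refine Finset.sum_congr rfl fun E hE => ?_
  simp only [mem_filter, mem_univ, true_and] at hE
  rw [← Finset.mul_sum, sg, ← Finset.sum_sdiff hE]
  ring

lemma inversion {n : ℕ} (ρ : Finset (Fin n) → Fin n → ℝ) (D : Finset (Fin n)) :
    sg n ρ D = ∑ E ∈ univ.filter (fun E => D ⊆ E), fm n ρ E := by
  have key : ∑ E ∈ univ.filter (fun E => D ⊆ E), fm n ρ E
      = ∑ F ∈ univ.filter (fun F => D ⊆ F),
          (∑ E ∈ univ.filter (fun E => D ⊆ E ∧ E ⊆ F), (-1 : ℝ) ^ (F \ E).card) * sg n ρ F := by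
    simp only [fm]
    rw [Finset.sum_comm' (s := univ.filter (fun E => D ⊆ E))
        (t := fun E => univ.filter (fun F => E ⊆ F))
        (t' := univ.filter (fun F => D ⊆ F))
        (s' := fun F => univ.filter (fun E => D ⊆ E ∧ E ⊆ F))
        (f := fun E F => (-1 : ℝ) ^ (F \ E).card * sg n ρ F)]
    · refine Finset.sum_congr rfl fun F hF => ?_
      rw [Finset.sum_mul]
    · intro E F
      simp only [mem_filter, mem_univ, true_and]
      constructor
      · rintro ⟨h1, h2⟩; exact ⟨⟨h1, h2⟩, h1.trans h2⟩
      · rintro ⟨⟨h1, h2⟩, _⟩; exact ⟨h1, h2⟩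
  rw [key]
  have inner : ∀ F ∈ univ.filter (fun F => D ⊆ F),
      (∑ E ∈ univ.filter (fun E => D ⊆ E ∧ E ⊆ F), (-1 : ℝ) ^ (F \ E).card)
        = if F = D then 1 else 0 := by
    intro F hF
    simp only [mem_filter, mem_univ, true_and] at hF
    have reidx : ∑ E ∈ univ.filter (fun E => D ⊆ E ∧ E ⊆ F), (-1 : ℝ) ^ (F \ E).card
        = ∑ B ∈ (F \ D).powerset, (-1 : ℝ) ^ B.card := by
      refine Finset.sum_nbij' (fun E => F \ E) (fun B => F \ B) ?_ ?_ ?_ ?_ ?_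
      · intro E hE
        simp only [mem_filter, mem_univ, true_and] at hE
        simp only [mem_powerset]
        exact Finset.sdiff_subset_sdiff le_rfl hE.1
      · intro B hB
        simp only [mem_powerset] at hB
        simp only [mem_filter, mem_univ, true_and]
        constructor
        · intro x hx
          simp only [mem_sdiff]
          refine ⟨hF hx, fun hxB => ?_⟩
          have := hB hxB
          simp only [mem_sdiff] at this
          exact this.2 hx
        · exact Finset.sdiff_subset
      · intro E hE
        simp only [mem_filter, mem_univ, true_and] at hE
        exact Finset.sdiff_sdiff_eq_self hE.2
      · intro B hB
        simp only [mem_powerset] at hB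
        exact Finset.sdiff_sdiff_eq_self (hB.trans Finset.sdiff_subset)
      · intro E _; rfl
    rw [reidx, alt_real]
    have : F \ D = ∅ ↔ F = D := by
      rw [Finset.sdiff_eq_empty_iff_subset]
      exact ⟨fun h => le_antisymm h hF, fun h => h ▸ le_rfl⟩
    simp only [this]
  have step : ∑ F ∈ univ.filter (fun F => D ⊆ F),
      (∑ E ∈ univ.filter (fun E => D ⊆ E ∧ E ⊆ F), (-1 : ℝ) ^ (F \ E).card) * sg n ρ F
      = ∑ F ∈ univ.filter (fun F => D ⊆ F), (if F = D then sg n ρ F else 0) := by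
    refine Finset.sum_congr rfl fun F hF => ?_
    rw [inner F hF]
    split <;> simp
  rw [step, Finset.sum_ite_eq']
  simp

/-- `ρ` satisfies the normalization constraints `∑_{x ∈ D} ρ(D,x) = 1` for all
nonempty `D` iff `κ = Kρ` is a flow on the Boolean lattice with total flow 1. -/
theorem normalization_iff_flow_one (n : ℕ) (hn : 0 < n)
    (ρ : Finset (Fin n) → Fin n → ℝ) :
    (∀ D : Finset (Fin n), D.Nonempty → ∑ x ∈ D, ρ D x = 1) ↔
      (IsFlow n (Kop n ρ) ∧ ∑ x : Fin n, Kop n ρ univ x = 1) := by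
  constructor
  · intro h
    constructor
    · intro D hD hDu
      rw [flow_diff]
      have : fm n ρ D = 0 := by
        rw [fm_eq]
        have h1 : ∀ A ∈ Dᶜ.powerset, ((-1 : ℝ) ^ A.card * sg n ρ (D ∪ A))
            = (-1 : ℝ) ^ A.card := by
          intro A hA
          have : sg n ρ (D ∪ A) = 1 := by
            apply h
            obtain ⟨x, hx⟩ := Finset.nonempty_iff_ne_empty.mpr hD
            exact ⟨x, Finset.mem_union_left _ hx⟩
          rw [this, mul_one]
        rw [Finset.sum_congr rfl h1, alt_real]
        have : Dᶜ ≠ ∅ := by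
          intro hc
          apply hDu
          rwa [Finset.compl_eq_empty_iff] at hc
        simp [this]
      rw [this, zero_add]
    · have := h univ (Finset.univ_nonempty_iff.mpr (Fin.pos_iff_nonempty.mp hn))
      calc ∑ x : Fin n, Kop n ρ univ x = ∑ x : Fin n, ρ univ x := by
            exact Finset.sum_congr rfl fun x _ => Kop_univ ρ x
        _ = 1 := this
  · rintro ⟨hflow, htot⟩
    intro D hD
    have hsg : sg n ρ D = 1 := by
      rw [inversion ρ D]
      have huniv_mem : univ ∈ univ.filter (fun E : Finset (Fin n) => D ⊆ E) := by
        simp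
      rw [Finset.sum_eq_single_of_mem univ huniv_mem]
      · rw [fm_univ, sg]
        calc ∑ x ∈ univ, ρ univ x = ∑ x : Fin n, Kop n ρ univ x :=
              (Finset.sum_congr rfl fun x _ => (Kop_univ ρ x).symm)
          _ = 1 := htot
      · intro E hE hEne
        simp only [mem_filter, mem_univ, true_and] at hE
        have hEemp : E ≠ ∅ := by
          intro hc
          rw [hc, Finset.subset_empty] at hE
          exact absurd hE (Finset.nonempty_iff_ne_empty.mp hD)
        have := hflow E hEemp hEne
        rw [flow_diff] at this
        linarith
    rw [← hsg, sg]
end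

section
/- Let P be a subset of the edge set E of the Boolean lattice graph 𝒢 with |P| = |E| - (2^n - 1), and let A_m : ℝ^𝓑 → ℝ^P be the restriction of KB to the rows indexed by P. Then A_m is invertible if and only if the complement E \ P is a spanning tree of 𝒢. -/
open Finset

/-- The edge set of the Boolean lattice graph: all valid pairs `(D,x)`
with `x ∈ D`; the edge `(D,x)` joins `D` and `D \ {x}`. -/
def Eall (n : ℕ) : Finset (Finset (Fin n) × Fin n) :=
  univ.filter (fun p => p.2 ∈ p.1)

/-- Adjacency in the graph whose edge set is `T`. -/
def adjVia (n : ℕ) (T : Finset (Finset (Fin n) × Fin n))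
    (A B : Finset (Fin n)) : Prop :=
  ∃ p ∈ T, (A = p.1 ∧ B = p.1.erase p.2) ∨ (B = p.1 ∧ A = p.1.erase p.2)

/-- `T` is a spanning tree of the Boolean lattice graph: it connects all
`2^n` vertices and has exactly `2^n - 1` edges. -/
def IsSpanningTree (n : ℕ) (T : Finset (Finset (Fin n) × Fin n)) : Prop :=
  (∀ A B : Finset (Fin n), Relation.ReflTransGen (adjVia n T) A B) ∧
    T.card = 2 ^ n - 1

/-- The reduced index set `𝓑`: pairs `(D,x)` with `x ∈ D` and `x ≠ max D`. -/
def BIdx (n : ℕ) : Type :=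
  {q : Finset (Fin n) × Fin n // q.2 ∈ q.1 ∧ ∃ y ∈ q.1, q.2 < y}

/-- The embedding `B : ℝ^𝓑 → ℝ^N`. -/
noncomputable def Bembed (n : ℕ) (ξ : BIdx n → ℝ)
    (D : Finset (Fin n)) (x : Fin n) : ℝ :=
  if hx : x ∈ D ∧ ∃ y ∈ D, x < y then ξ ⟨(D, x), hx⟩
  else if x ∈ D then
    -∑ y ∈ D.erase x,
      (if hy : y ∈ D ∧ ∃ z ∈ D, y < z then ξ ⟨(D, y), hy⟩ else 0)
  else 0

open Matrix


lemma alt_sum {n : ℕ} (D F : Finset (Fin n)) (hDF : D ⊆ F) :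
    ∑ E ∈ univ.filter (fun E => D ⊆ E ∧ E ⊆ F), (-1 : ℝ) ^ (F \ E).card
      = if F = D then 1 else 0 := by
  have h : ∑ E ∈ univ.filter (fun E => D ⊆ E ∧ E ⊆ F), (-1 : ℝ) ^ (F \ E).card
      = ∑ G ∈ (F \ D).powerset, (-1 : ℝ) ^ G.card := by
    refine Finset.sum_nbij' (fun E => F \ E) (fun G => F \ G) ?_ ?_ ?_ ?_ ?_
    · intro E hE; simp only [mem_filter, mem_univ, true_and] at hE
      exact Finset.mem_powerset.2 (Finset.sdiff_subset_sdiff (le_refl F) hE.1)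
    · intro G hG; simp only [Finset.mem_powerset] at hG
      simp only [mem_filter, mem_univ, true_and]
      constructor
      · intro x hx
        refine Finset.mem_sdiff.2 ⟨hDF hx, fun hxG => ?_⟩
        exact (Finset.mem_sdiff.1 (hG hxG)).2 hx
      · exact Finset.sdiff_subset
    · intro E hE; simp only [mem_filter, mem_univ, true_and] at hE
      exact Finset.sdiff_sdiff_eq_self hE.2
    · intro G hG; simp only [Finset.mem_powerset] at hG
      exact Finset.sdiff_sdiff_eq_self (hG.trans Finset.sdiff_subset)
    · intro E _; rfl
  have h2 : ∑ G ∈ (F \ D).powerset, (-1 : ℝ) ^ G.card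
      = (((∑ G ∈ (F \ D).powerset, (-1 : ℤ) ^ G.card) : ℤ) : ℝ) := by push_cast; rfl
  rw [h, h2, Finset.sum_powerset_neg_one_pow_card]
  have hiff : (F \ D = ∅) ↔ F = D := by
    rw [Finset.sdiff_eq_empty_iff_subset]
    exact ⟨fun h' => le_antisymm h' hDF, fun h' => h'.le⟩
  simp only [hiff]
  split_ifs <;> simp

lemma mobius_inv {n : ℕ} (ρ : Finset (Fin n) → Fin n → ℝ) (D : Finset (Fin n)) (x : Fin n) :
    ∑ F ∈ univ.filter (fun F => D ⊆ F), Kop n ρ F x = ρ D x := by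
  unfold Kop
  rw [Finset.sum_sigma']
  have step : ∑ q ∈ (univ.filter (fun F => D ⊆ F)).sigma
        (fun F => univ.filter (fun E => F ⊆ E)),
        (-1 : ℝ) ^ (q.2 \ q.1).card * ρ q.2 x
      = ∑ q ∈ (univ.filter (fun E => D ⊆ E)).sigma
        (fun E => univ.filter (fun F => D ⊆ F ∧ F ⊆ E)),
        (-1 : ℝ) ^ (q.1 \ q.2).card * ρ q.1 x := by
    refine Finset.sum_nbij' (fun q => ⟨q.2, q.1⟩) (fun q => ⟨q.2, q.1⟩) ?_ ?_
      (fun _ _ => rfl) (fun _ _ => rfl) (fun _ _ => rfl)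
    · rintro ⟨F, E⟩ hq
      simp only [Finset.mem_sigma, mem_filter, mem_univ, true_and] at hq ⊢
      exact ⟨hq.1.trans hq.2, hq.1, hq.2⟩
    · rintro ⟨E, F⟩ hq
      simp only [Finset.mem_sigma, mem_filter, mem_univ, true_and] at hq ⊢
      exact ⟨hq.2.1, hq.2.2⟩
  rw [step]
  · rw [Finset.sum_sigma]
    have key : ∀ E ∈ univ.filter (fun E => D ⊆ E),
        (∑ F ∈ univ.filter (fun F => D ⊆ F ∧ F ⊆ E), (-1 : ℝ) ^ (E \ F).card * ρ E x)
        = (if E = D then 1 else 0) * ρ E x := by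
      intro E hE
      rw [← Finset.sum_mul, alt_sum D E (by simpa using hE)]
    rw [Finset.sum_congr rfl key]
    simp [ite_mul, Finset.sum_ite_eq']

lemma Bembed_rowsum {n : ℕ} (ξ : BIdx n → ℝ) (E : Finset (Fin n)) :
    ∑ x ∈ E, Bembed n ξ E x = 0 := by
  rcases E.eq_empty_or_nonempty with rfl | hE
  · simp
  · set m := E.max' hE with hm
    have hmE : m ∈ E := E.max'_mem hE
    have hnotm : ¬(m ∈ E ∧ ∃ y ∈ E, m < y) := by
      rintro ⟨-, y, hy, hlt⟩
      exact absurd (E.le_max' y hy) (not_le.2 hlt)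
    have hother : ∀ x ∈ E.erase m, (x ∈ E ∧ ∃ y ∈ E, x < y) := by
      intro x hx
      have hxE := Finset.mem_of_mem_erase hx
      exact ⟨hxE, m, hmE, lt_of_le_of_ne (E.le_max' x hxE) (Finset.ne_of_mem_erase hx)⟩
    rw [← Finset.add_sum_erase _ _ hmE]
    have h1 : Bembed n ξ E m
        = -∑ y ∈ E.erase m, (if hy : y ∈ E ∧ ∃ z ∈ E, y < z then ξ ⟨(E, y), hy⟩ else 0) := by
      unfold Bembed
      rw [dif_neg hnotm, if_pos hmE]
    have h2 : ∑ x ∈ E.erase m, Bembed n ξ E x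
        = ∑ y ∈ E.erase m, (if hy : y ∈ E ∧ ∃ z ∈ E, y < z then ξ ⟨(E, y), hy⟩ else 0) := by
      refine Finset.sum_congr rfl (fun x hx => ?_)
      unfold Bembed
      rw [dif_pos (hother x hx), dif_pos (hother x hx)]
    rw [h1, h2]
    ring

lemma Bembed_add {n : ℕ} (ξ₁ ξ₂ : BIdx n → ℝ) :
    Bembed n (ξ₁ + ξ₂) = fun D x => Bembed n ξ₁ D x + Bembed n ξ₂ D x := by
  show Bembed n (fun q => ξ₁ q + ξ₂ q) = _
  funext D x
  unfold Bembed
  split_ifs <;> simp only [Pi.add_apply, add_zero]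
  rw [← neg_add, ← Finset.sum_add_distrib]
  congr 1
  refine Finset.sum_congr rfl (fun y hy => ?_)
  split_ifs <;> simp

lemma Bembed_smul {n : ℕ} (c : ℝ) (ξ : BIdx n → ℝ) :
    Bembed n (c • ξ) = fun D x => c * Bembed n ξ D x := by
  show Bembed n (fun q => c * ξ q) = _
  funext D x
  unfold Bembed
  split_ifs <;> simp only [Pi.smul_apply, smul_eq_mul, mul_zero]
  rw [mul_neg, Finset.mul_sum, neg_inj]
  refine Finset.sum_congr rfl (fun y hy => ?_)
  split_ifs <;> simp

lemma Kop_add {n : ℕ} (ρ₁ ρ₂ : Finset (Fin n) → Fin n → ℝ) (D : Finset (Fin n)) (x : Fin n) :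
    Kop n (fun E y => ρ₁ E y + ρ₂ E y) D x = Kop n ρ₁ D x + Kop n ρ₂ D x := by
  unfold Kop
  rw [← Finset.sum_add_distrib]
  exact Finset.sum_congr rfl (fun E _ => by ring)

lemma Kop_smul {n : ℕ} (c : ℝ) (ρ : Finset (Fin n) → Fin n → ℝ) (D : Finset (Fin n)) (x : Fin n) :
    Kop n (fun E y => c * ρ E y) D x = c * Kop n ρ D x := by
  unfold Kop
  rw [Finset.mul_sum]
  exact Finset.sum_congr rfl (fun E _ => by ring)

noncomputable def KB (n : ℕ) : (BIdx n → ℝ) →ₗ[ℝ] ({p // p ∈ Eall n} → ℝ) where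
  toFun ξ := fun p => Kop n (Bembed n ξ) p.1.1 p.1.2
  map_add' ξ₁ ξ₂ := by
    funext p
    have : Bembed n (ξ₁ + ξ₂) = fun D x => Bembed n ξ₁ D x + Bembed n ξ₂ D x := Bembed_add ξ₁ ξ₂
    simp only [this, Pi.add_apply]
    exact Kop_add _ _ _ _
  map_smul' c ξ := by
    funext p
    have : Bembed n (c • ξ) = fun D x => c * Bembed n ξ D x := Bembed_smul c ξ
    simp only [this, RingHom.id_apply, Pi.smul_apply, smul_eq_mul]
    exact Kop_smul _ _ _ _

noncomputable def inc (n : ℕ) (S : Finset (Finset (Fin n) × Fin n)) :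
    Matrix (Finset (Fin n)) {p // p ∈ S} ℝ :=
  fun A p => (if p.1.1 = A then 1 else 0) - (if p.1.1.erase p.1.2 = A then 1 else 0)

/-- The flow identity: for `ρ` with zero row sums, the Möbius operator produces a circulation. -/
lemma flow_identity {n : ℕ} (ρ : Finset (Fin n) → Fin n → ℝ)
    (hρ : ∀ E, ∑ x ∈ E, ρ E x = 0) (A : Finset (Fin n)) :
    ∑ x ∈ A, Kop n ρ A x = ∑ x ∈ univ.filter (fun x => x ∉ A), Kop n ρ (insert x A) x := by
  have hL : ∑ x ∈ A, Kop n ρ A x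
      = ∑ E ∈ univ.filter (fun E => A ⊆ E), (-1 : ℝ) ^ (E \ A).card * ∑ x ∈ A, ρ E x := by
    unfold Kop
    rw [Finset.sum_comm]
    exact Finset.sum_congr rfl (fun E _ => by rw [Finset.mul_sum])
  have hR : ∑ x ∈ univ.filter (fun x => x ∉ A), Kop n ρ (insert x A) x
      = -∑ E ∈ univ.filter (fun E => A ⊆ E), (-1 : ℝ) ^ (E \ A).card * ∑ x ∈ E \ A, ρ E x := by
    unfold Kop
    rw [Finset.sum_sigma']
    have step : ∑ q ∈ (univ.filter (fun x => x ∉ A)).sigma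
          (fun x => univ.filter (fun E => insert x A ⊆ E)),
          (-1 : ℝ) ^ (q.2 \ insert q.1 A).card * ρ q.2 q.1
        = ∑ q ∈ (univ.filter (fun E => A ⊆ E)).sigma (fun E => E \ A),
          (-1 : ℝ) ^ (q.1 \ insert q.2 A).card * ρ q.1 q.2 := by
      refine Finset.sum_nbij' (fun q => ⟨q.2, q.1⟩) (fun q => ⟨q.2, q.1⟩) ?_ ?_
        (fun _ _ => rfl) (fun _ _ => rfl) (fun _ _ => rfl)
      · rintro ⟨x, E⟩ hq
        simp only [Finset.mem_sigma, mem_filter, mem_univ, true_and] at hq ⊢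
        have hins := hq.2
        refine ⟨(Finset.subset_insert x A).trans hins, ?_⟩
        exact Finset.mem_sdiff.2 ⟨hins (Finset.mem_insert_self x A), hq.1⟩
      · rintro ⟨E, x⟩ hq
        simp only [Finset.mem_sigma, mem_filter, mem_univ, true_and] at hq ⊢
        have hx := Finset.mem_sdiff.1 hq.2
        exact ⟨hx.2, Finset.insert_subset hx.1 hq.1⟩
    rw [step, Finset.sum_sigma, ← Finset.sum_neg_distrib]
    refine Finset.sum_congr rfl (fun E hE => ?_)
    simp only [mem_filter, mem_univ, true_and] at hE
    rw [Finset.mul_sum, ← Finset.sum_neg_distrib]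
    refine Finset.sum_congr rfl (fun x hx => ?_)
    have hx' := Finset.mem_sdiff.1 hx
    have h1 : E \ insert x A = (E \ A).erase x := by
      rw [Finset.sdiff_insert]
    have h2 : ((E \ A).erase x).card + 1 = (E \ A).card :=
      Finset.card_erase_add_one hx
    have h3 : (-1 : ℝ) ^ (E \ A).card = -(-1 : ℝ) ^ (E \ insert x A).card := by
      rw [h1, ← h2, pow_succ]
      ring
    rw [h3]
    ring
  rw [hL, hR]
  have key : ∀ E ∈ univ.filter (fun E => A ⊆ E),
      (-1 : ℝ) ^ (E \ A).card * ∑ x ∈ A, ρ E x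
        = -((-1 : ℝ) ^ (E \ A).card * ∑ x ∈ E \ A, ρ E x) := by
    intro E hE
    simp only [mem_filter, mem_univ, true_and] at hE
    have hsplit : (∑ x ∈ E \ A, ρ E x) + ∑ x ∈ A, ρ E x = ∑ x ∈ E, ρ E x :=
      Finset.sum_sdiff hE
    have := hρ E
    rw [this] at hsplit
    have hAx : ∑ x ∈ A, ρ E x = -∑ x ∈ E \ A, ρ E x := by linarith
    rw [hAx]
    ring
  rw [Finset.sum_congr rfl key, Finset.sum_neg_distrib]

lemma mulVec_inc {n : ℕ} (S : Finset (Finset (Fin n) × Fin n))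
    (G : Finset (Fin n) × Fin n → ℝ) (A : Finset (Fin n)) :
    (inc n S).mulVec (fun p => G p.1) A
      = (∑ p ∈ S.filter (fun p => p.1 = A), G p)
        - ∑ p ∈ S.filter (fun p => p.1.erase p.2 = A), G p := by
  have h0 : (inc n S).mulVec (fun p => G p.1) A
      = ∑ p ∈ S, ((if p.1 = A then (1 : ℝ) else 0) - (if p.1.erase p.2 = A then 1 else 0)) * G p := by
    rw [← Finset.sum_coe_sort S
      (fun p => ((if p.1 = A then (1 : ℝ) else 0) - (if p.1.erase p.2 = A then 1 else 0)) * G p)]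
    rfl
  rw [h0]
  have h1 : ∀ p ∈ S, ((if p.1 = A then (1 : ℝ) else 0) - (if p.1.erase p.2 = A then 1 else 0)) * G p
      = (if p.1 = A then G p else 0) - (if p.1.erase p.2 = A then G p else 0) := by
    intro p _
    split_ifs <;> ring
  rw [Finset.sum_congr rfl h1, Finset.sum_sub_distrib, Finset.sum_filter, Finset.sum_filter]

lemma div_KB {n : ℕ} (ξ : BIdx n → ℝ) :
    (inc n (Eall n)).mulVec (KB n ξ) = 0 := by
  funext A
  set ρ := Bembed n ξ with hρdef
  have h2 : (inc n (Eall n)).mulVec (KB n ξ) A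
      = (∑ p ∈ (Eall n).filter (fun p => p.1 = A), Kop n ρ p.1 p.2)
        - ∑ p ∈ (Eall n).filter (fun p => p.1.erase p.2 = A), Kop n ρ p.1 p.2 :=
    mulVec_inc (Eall n) (fun q => Kop n ρ q.1 q.2) A
  rw [h2]
  have hT1 : ∑ p ∈ (Eall n).filter (fun p => p.1 = A), Kop n ρ p.1 p.2
      = ∑ x ∈ A, Kop n ρ A x := by
    refine Finset.sum_nbij' (fun p => p.2) (fun x => (A, x)) ?_ ?_ ?_ ?_ ?_
    · rintro ⟨D, x⟩ hp
      simp only [Eall, mem_filter, mem_univ, true_and] at hp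
      rcases hp with ⟨hx, rfl⟩
      exact hx
    · intro x hx
      simp [Eall, hx]
    · rintro ⟨D, x⟩ hp
      simp only [Eall, mem_filter, mem_univ, true_and] at hp
      rcases hp with ⟨-, rfl⟩
      rfl
    · intro x _; rfl
    · rintro ⟨D, x⟩ hp
      simp only [Eall, mem_filter, mem_univ, true_and] at hp
      rcases hp with ⟨-, rfl⟩
      rfl
  have hT2 : ∑ p ∈ (Eall n).filter (fun p => p.1.erase p.2 = A), Kop n ρ p.1 p.2
      = ∑ x ∈ univ.filter (fun x => x ∉ A), Kop n ρ (insert x A) x := by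
    refine Finset.sum_nbij' (fun p => p.2) (fun x => (insert x A, x)) ?_ ?_ ?_ ?_ ?_
    · rintro ⟨D, x⟩ hp
      simp only [Eall, mem_filter, mem_univ, true_and] at hp ⊢
      rcases hp with ⟨hx, hDA⟩
      rw [← hDA]
      exact Finset.notMem_erase x D
    · intro x hx
      simp only [Eall, mem_filter, mem_univ, true_and] at hx ⊢
      exact ⟨Finset.mem_insert_self x A, Finset.erase_insert hx⟩
    · rintro ⟨D, x⟩ hp
      simp only [Eall, mem_filter, mem_univ, true_and] at hp
      rcases hp with ⟨hx, hDA⟩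
      simp only [← hDA, Finset.insert_erase hx]
    · intro x _; rfl
    · rintro ⟨D, x⟩ hp
      simp only [Eall, mem_filter, mem_univ, true_and] at hp
      rcases hp with ⟨hx, hDA⟩
      simp only [← hDA, Finset.insert_erase hx]
  rw [hT1, hT2, flow_identity ρ (Bembed_rowsum ξ) A]
  simp

noncomputable def gradL (n : ℕ) (S : Finset (Finset (Fin n) × Fin n)) :
    ((Finset (Fin n)) → ℝ) →ₗ[ℝ] ({p // p ∈ S} → ℝ) := (inc n S)ᵀ.mulVecLin

lemma gradL_apply {n : ℕ} (S : Finset (Finset (Fin n) × Fin n)) (g : Finset (Fin n) → ℝ)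
    (p : {p // p ∈ S}) : gradL n S g p = g p.1.1 - g (p.1.1.erase p.1.2) := by
  show ∑ A, ((if p.1.1 = A then (1:ℝ) else 0) - (if p.1.1.erase p.1.2 = A then 1 else 0)) * g A
    = _
  have : ∀ A, ((if p.1.1 = A then (1:ℝ) else 0) - (if p.1.1.erase p.1.2 = A then 1 else 0)) * g A
      = (if p.1.1 = A then g A else 0) - (if p.1.1.erase p.1.2 = A then g A else 0) := by
    intro A; split_ifs <;> ring
  rw [Finset.sum_congr rfl (fun A _ => this A), Finset.sum_sub_distrib]
  simp [Finset.sum_ite_eq]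

lemma mem_ker_gradL {n : ℕ} (S : Finset (Finset (Fin n) × Fin n)) (g : Finset (Fin n) → ℝ) :
    g ∈ LinearMap.ker (gradL n S) ↔ ∀ p ∈ S, g p.1 = g (p.1.erase p.2) := by
  rw [LinearMap.mem_ker]
  constructor
  · intro h p hp
    have := congrFun h ⟨p, hp⟩
    rw [gradL_apply] at this
    simpa [sub_eq_zero] using this
  · intro h
    funext p
    rw [gradL_apply]
    simp [sub_eq_zero, h p.1 p.2]

lemma reach_const {n : ℕ} (S : Finset (Finset (Fin n) × Fin n)) (g : Finset (Fin n) → ℝ)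
    (hg : ∀ p ∈ S, g p.1 = g (p.1.erase p.2)) {A B : Finset (Fin n)}
    (h : Relation.ReflTransGen (adjVia n S) A B) : g A = g B := by
  induction h with
  | refl => rfl
  | tail _ hadj ih =>
    rcases hadj with ⟨p, hp, ⟨h1, h2⟩ | ⟨h1, h2⟩⟩
    · rw [ih, h1, h2, hg p hp]
    · rw [ih, h2, h1, ← hg p hp]

lemma one_ne_zero_fun {n : ℕ} : (fun (_ : Finset (Fin n)) => (1:ℝ)) ≠ 0 := by
  intro h
  have := congrFun h ∅
  norm_num at this

lemma const_mem_ker {n : ℕ} (S : Finset (Finset (Fin n) × Fin n)) :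
    (fun (_ : Finset (Fin n)) => (1:ℝ)) ∈ LinearMap.ker (gradL n S) := by
  rw [mem_ker_gradL]
  intros; rfl

lemma finrank_ker_gradL_of_conn {n : ℕ} (S : Finset (Finset (Fin n) × Fin n))
    (hconn : ∀ A B : Finset (Fin n), Relation.ReflTransGen (adjVia n S) A B) :
    Module.finrank ℝ (LinearMap.ker (gradL n S)) = 1 := by
  have hker : LinearMap.ker (gradL n S)
      = Submodule.span ℝ {(fun (_ : Finset (Fin n)) => (1:ℝ))} := by
    apply le_antisymm
    · intro g hg
      rw [mem_ker_gradL] at hg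
      rw [Submodule.mem_span_singleton]
      refine ⟨g ∅, ?_⟩
      funext A
      have := reach_const S g hg (hconn A ∅)
      simp [this]
    · rw [Submodule.span_le, Set.singleton_subset_iff]
      exact const_mem_ker S
  rw [hker, finrank_span_singleton one_ne_zero_fun]

lemma finrank_ker_gradL_of_not_conn {n : ℕ} (S : Finset (Finset (Fin n) × Fin n))
    (hnot : ¬ ∀ A B : Finset (Fin n), Relation.ReflTransGen (adjVia n S) A B) :
    2 ≤ Module.finrank ℝ (LinearMap.ker (gradL n S)) := by
  push_neg at hnot
  obtain ⟨A, B, hAB⟩ := hnot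
  classical
  set g : Finset (Fin n) → ℝ :=
    fun C => if Relation.ReflTransGen (adjVia n S) A C then (1:ℝ) else 0 with hgdef
  have hgker : g ∈ LinearMap.ker (gradL n S) := by
    rw [mem_ker_gradL]
    intro p hp
    have hiff : Relation.ReflTransGen (adjVia n S) A p.1
        ↔ Relation.ReflTransGen (adjVia n S) A (p.1.erase p.2) := by
      constructor
      · intro h
        exact h.tail ⟨p, hp, Or.inl ⟨rfl, rfl⟩⟩
      · intro h
        exact h.tail ⟨p, hp, Or.inr ⟨rfl, rfl⟩⟩
    simp only [hgdef]
    rw [if_congr hiff rfl rfl]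
  have hgA : g A = 1 := by simp [hgdef, Relation.ReflTransGen.refl]
  have hgB : g B = 0 := by simp [hgdef, hAB]
  have hli : LinearIndependent ℝ ![(fun (_ : Finset (Fin n)) => (1:ℝ)), g] := by
    rw [LinearIndependent.pair_iff]
    intro s t hst
    have hB := congrFun hst B
    have hA := congrFun hst A
    simp [hgB, hgA] at hB hA
    constructor
    · exact hB
    · rw [hB] at hA; linarith
  have hspan : Submodule.span ℝ (Set.range ![(fun (_ : Finset (Fin n)) => (1:ℝ)), g])
      ≤ LinearMap.ker (gradL n S) := by
    rw [Submodule.span_le]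
    rintro f ⟨i, rfl⟩
    fin_cases i
    · exact const_mem_ker S
    · exact hgker
  calc (2 : ℕ) = Module.finrank ℝ
        (Submodule.span ℝ (Set.range ![(fun (_ : Finset (Fin n)) => (1:ℝ)), g])) := by
        rw [finrank_span_eq_card hli]; simp
    _ ≤ _ := Submodule.finrank_mono hspan

lemma rank_add_ker_div {n : ℕ} (S : Finset (Finset (Fin n) × Fin n)) :
    (inc n S).rank + Module.finrank ℝ (LinearMap.ker ((inc n S).mulVecLin)) = S.card := by
  have := LinearMap.finrank_range_add_finrank_ker ((inc n S).mulVecLin)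
  rw [Module.finrank_pi] at this
  simpa [Matrix.rank, Fintype.card_coe] using this

lemma rank_add_ker_grad {n : ℕ} (S : Finset (Finset (Fin n) × Fin n)) :
    (inc n S).rank + Module.finrank ℝ (LinearMap.ker (gradL n S)) = 2 ^ n := by
  have := LinearMap.finrank_range_add_finrank_ker (gradL n S)
  rw [Module.finrank_pi] at this
  have hrt : (inc n S)ᵀ.rank = (inc n S).rank := Matrix.rank_transpose _
  have hcard : Fintype.card (Finset (Fin n)) = 2 ^ n := by
    rw [Fintype.card_finset, Fintype.card_fin]
  rw [← hrt, ← hcard]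
  simp only [Matrix.rank, gradL] at this ⊢
  convert this using 4
  rfl

instance BIdx.fintype (n : ℕ) : Fintype (BIdx n) :=
  inferInstanceAs (Fintype {q : Finset (Fin n) × Fin n // q.2 ∈ q.1 ∧ ∃ y ∈ q.1, q.2 < y})

lemma card_filter_mem {n : ℕ} (x : Fin n) :
    (univ.filter (fun D : Finset (Fin n) => x ∈ D)).card = 2 ^ (n - 1) := by
  have h : (univ.filter (fun D : Finset (Fin n) => x ∈ D)).card
      = (((univ : Finset (Fin n)).erase x).powerset).card := by
    refine Finset.card_nbij' (fun D => D.erase x) (fun G => insert x G) ?_ ?_ ?_ ?_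
    · intro D hD
      simp only [Finset.mem_coe, mem_filter, mem_univ, true_and] at hD
      exact Finset.mem_powerset.2 (Finset.erase_subset_erase x (Finset.subset_univ D))
    · intro G hG
      simp only [Finset.mem_coe, Finset.mem_powerset] at hG
      simp only [Finset.mem_coe, mem_filter, mem_univ, true_and]
      exact Finset.mem_insert_self x G
    · intro D hD
      simp only [Finset.mem_coe, mem_filter, mem_univ, true_and] at hD
      exact Finset.insert_erase hD
    · intro G hG
      simp only [Finset.mem_coe, Finset.mem_powerset] at hG
      refine Finset.erase_insert (fun hx => ?_)
      exact absurd (hG hx) (Finset.notMem_erase x univ)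
  rw [h, Finset.card_powerset, Finset.card_erase_of_mem (Finset.mem_univ x), Finset.card_univ,
    Fintype.card_fin]

lemma card_Eall (n : ℕ) : (Eall n).card = n * 2 ^ (n - 1) := by
  rw [Finset.card_eq_sum_card_fiberwise (f := fun p => p.2) (t := univ)
    (fun p _ => Finset.mem_univ _)]
  have h : ∀ x : Fin n, ((Eall n).filter (fun p => p.2 = x)).card = 2 ^ (n - 1) := by
    intro x
    rw [show ((Eall n).filter (fun p => p.2 = x)).card
        = (univ.filter (fun D : Finset (Fin n) => x ∈ D)).card from ?_, card_filter_mem]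
    refine Finset.card_nbij' (fun p => p.1) (fun D => (D, x)) ?_ ?_ ?_ ?_
    · rintro ⟨D, y⟩ hp
      simp only [Finset.mem_coe, Eall, mem_filter, mem_univ, true_and] at hp ⊢
      rcases hp with ⟨hy, rfl⟩
      exact hy
    · intro D hD
      simp only [Finset.mem_coe, mem_filter, mem_univ, true_and] at hD
      simp [Eall, hD]
    · rintro ⟨D, y⟩ hp
      simp only [Finset.mem_coe, Eall, mem_filter, mem_univ, true_and] at hp
      rcases hp with ⟨-, rfl⟩
      rfl
    · intro D _; rfl
  rw [Finset.sum_congr rfl (fun x _ => h x), Finset.sum_const, Finset.card_univ, Fintype.card_fin,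
    smul_eq_mul]

lemma card_nonempty_finsets (n : ℕ) :
    (univ.filter (fun D : Finset (Fin n) => D.Nonempty)).card = 2 ^ n - 1 := by
  have h := Finset.card_filter_add_card_filter_not
    (s := (univ : Finset (Finset (Fin n)))) (p := fun D => D.Nonempty)
  beta_reduce at h
  have h2 : (univ.filter (fun D : Finset (Fin n) => ¬D.Nonempty)) = {∅} := by
    ext A
    simp [Finset.not_nonempty_iff_eq_empty]
  rw [h2] at h
  have h3 : (univ : Finset (Finset (Fin n))).card = 2 ^ n := by
    rw [Finset.card_univ, Fintype.card_finset, Fintype.card_fin]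
  simp only [Finset.card_singleton] at h
  omega

lemma card_max_pairs (n : ℕ) (hn : 0 < n) :
    ((Eall n).filter (fun q => ¬∃ y ∈ q.1, q.2 < y)).card = 2 ^ n - 1 := by
  rw [show ((Eall n).filter (fun q => ¬∃ y ∈ q.1, q.2 < y)).card
      = (univ.filter (fun D : Finset (Fin n) => D.Nonempty)).card from ?_,
    card_nonempty_finsets]
  refine Finset.card_nbij' (fun q => q.1)
    (fun D => (D, if h : D.Nonempty then D.max' h else ⟨0, hn⟩)) ?_ ?_ ?_ ?_
  · rintro ⟨D, x⟩ hp
    simp only [Finset.mem_coe, Eall, mem_filter, mem_univ, true_and] at hp ⊢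
    exact ⟨x, hp.1⟩
  · intro D hD
    simp only [Finset.mem_coe, mem_filter, mem_univ, true_and] at hD
    simp only [Finset.mem_coe, Eall, mem_filter, mem_univ, true_and, dif_pos hD]
    refine ⟨D.max'_mem hD, ?_⟩
    rintro ⟨y, hy, hlt⟩
    exact absurd (D.le_max' y hy) (not_le.2 hlt)
  · rintro ⟨D, x⟩ hp
    simp only [Finset.mem_coe, Eall, mem_filter, mem_univ, true_and] at hp
    obtain ⟨hx, hmax⟩ := hp
    have hD : D.Nonempty := ⟨x, hx⟩
    simp only [dif_pos hD]
    have h1 : D.max' hD = x := by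
      refine le_antisymm ?_ (D.le_max' x hx)
      by_contra hlt
      exact hmax ⟨D.max' hD, D.max'_mem hD, lt_of_not_ge hlt⟩
    rw [h1]
  · intro D _; rfl

lemma card_BIdx (n : ℕ) (hn : 0 < n) :
    Fintype.card (BIdx n) = n * 2 ^ (n - 1) - (2 ^ n - 1) := by
  have h0 : Fintype.card (BIdx n)
      = (univ.filter (fun q : Finset (Fin n) × Fin n =>
          q.2 ∈ q.1 ∧ ∃ y ∈ q.1, q.2 < y)).card := Fintype.card_subtype _
  have h1 : (univ.filter (fun q : Finset (Fin n) × Fin n => q.2 ∈ q.1 ∧ ∃ y ∈ q.1, q.2 < y))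
      = (Eall n).filter (fun q => ∃ y ∈ q.1, q.2 < y) := by
    rw [Eall, Finset.filter_filter]
  have h2 := Finset.card_filter_add_card_filter_not
    (s := Eall n) (p := fun q => ∃ y ∈ q.1, q.2 < y)
  beta_reduce at h2
  rw [card_max_pairs n hn] at h2
  rw [h0, h1, ← card_Eall n]
  omega

lemma adjVia_symm {n : ℕ} (S : Finset (Finset (Fin n) × Fin n)) :
    Symmetric (adjVia n S) := by
  rintro A B ⟨p, hp, h | h⟩
  · exact ⟨p, hp, Or.inr h⟩
  · exact ⟨p, hp, Or.inl h⟩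

lemma conn_Eall (n : ℕ) :
    ∀ A B : Finset (Fin n), Relation.ReflTransGen (adjVia n (Eall n)) A B := by
  have key : ∀ A : Finset (Fin n), Relation.ReflTransGen (adjVia n (Eall n)) A ∅ := by
    intro A
    induction A using Finset.strongInduction with
    | _ A ih =>
      rcases A.eq_empty_or_nonempty with rfl | hA
      · exact Relation.ReflTransGen.refl
      · obtain ⟨x, hx⟩ := hA
        have hadj : adjVia n (Eall n) A (A.erase x) :=
          ⟨(A, x), by simp [Eall, hx], Or.inl ⟨rfl, rfl⟩⟩
        exact Relation.ReflTransGen.head hadj (ih (A.erase x) (Finset.erase_ssubset hx))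
  intro A B
  exact (key A).trans ((@Relation.ReflTransGen.symmetric _ _ ⟨fun _ _ h => adjVia_symm _ h⟩).symm _ _ (key B))

lemma KB_ker (n : ℕ) : LinearMap.ker (KB n) = ⊥ := by
  rw [LinearMap.ker_eq_bot']
  intro ξ hξ
  funext i
  obtain ⟨⟨D, x⟩, hx⟩ := i
  have hKB : ∀ p : {p // p ∈ Eall n}, Kop n (Bembed n ξ) p.1.1 p.1.2 = 0 :=
    fun p => congrFun hξ p
  have h1 : ξ ⟨(D, x), hx⟩ = Bembed n ξ D x := by
    unfold Bembed
    rw [dif_pos hx]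
  have h2 : Bembed n ξ D x = ∑ F ∈ univ.filter (fun F => D ⊆ F), Kop n (Bembed n ξ) F x :=
    (mobius_inv (Bembed n ξ) D x).symm
  have h3 : ∀ F ∈ univ.filter (fun F => D ⊆ F), Kop n (Bembed n ξ) F x = 0 := by
    intro F hF
    simp only [mem_filter, mem_univ, true_and] at hF
    have hxF : x ∈ F := hF hx.1
    have : ((F, x) : Finset (Fin n) × Fin n) ∈ Eall n := by simp [Eall, hxF]
    exact hKB ⟨(F, x), this⟩
  rw [h1, h2, Finset.sum_congr rfl h3]
  simp
  rfl

lemma mulVec_inc_support {n : ℕ} (T S : Finset (Finset (Fin n) × Fin n)) (hTS : T ⊆ S)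
    (G : Finset (Fin n) × Fin n → ℝ) (hG : ∀ q ∉ T, G q = 0) :
    (inc n T).mulVec (fun p => G p.1) = (inc n S).mulVec (fun p => G p.1) := by
  funext A
  rw [mulVec_inc, mulVec_inc]
  congr 1
  · refine Finset.sum_subset (Finset.filter_subset_filter _ hTS) (fun p hp hnp => ?_)
    refine hG p (fun hpT => hnp ?_)
    simp only [mem_filter] at hp ⊢
    exact ⟨hpT, hp.2⟩
  · refine Finset.sum_subset (Finset.filter_subset_filter _ hTS) (fun p hp hnp => ?_)
    refine hG p (fun hpT => hnp ?_)
    simp only [mem_filter] at hp ⊢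
    exact ⟨hpT, hp.2⟩

lemma arith_le (n : ℕ) (hn : 0 < n) : 2 ^ n - 1 ≤ n * 2 ^ (n - 1) := by
  have h : 2 ^ n = 2 * 2 ^ (n - 1) := by
    rw [← pow_succ']
    congr 1
    omega
  rcases Nat.lt_or_ge n 2 with h2 | h2
  · interval_cases n <;> simp
  · have : 2 * 2 ^ (n - 1) ≤ n * 2 ^ (n - 1) := Nat.mul_le_mul_right _ h2
    omega

lemma KB_mem_W {n : ℕ} (ξ : BIdx n → ℝ) :
    KB n ξ ∈ LinearMap.ker ((inc n (Eall n)).mulVecLin) := by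
  rw [LinearMap.mem_ker, Matrix.mulVecLin_apply]
  exact div_KB ξ

noncomputable def KBW (n : ℕ) :
    (BIdx n → ℝ) →ₗ[ℝ] (LinearMap.ker ((inc n (Eall n)).mulVecLin)) :=
  LinearMap.codRestrict _ (KB n) KB_mem_W

lemma finrank_W (n : ℕ) :
    Module.finrank ℝ (LinearMap.ker ((inc n (Eall n)).mulVecLin))
      = n * 2 ^ (n - 1) - (2 ^ n - 1) := by
  have h1 := rank_add_ker_div (Eall n)
  have h2 := rank_add_ker_grad (Eall n)
  rw [finrank_ker_gradL_of_conn (Eall n) (conn_Eall n)] at h2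
  rw [card_Eall n] at h1
  omega

lemma KBW_surj (n : ℕ) (hn : 0 < n) : Function.Surjective (KBW n) := by
  have hinj : Function.Injective (KBW n) := by
    rw [← LinearMap.ker_eq_bot, KBW, LinearMap.ker_codRestrict]
    exact KB_ker n
  have hfr : Module.finrank ℝ (BIdx n → ℝ)
      = Module.finrank ℝ (LinearMap.ker ((inc n (Eall n)).mulVecLin)) := by
    rw [Module.finrank_pi, card_BIdx n hn, finrank_W n]
  exact (LinearMap.injective_iff_surjective_of_finrank_eq_finrank hfr).1 hinj

noncomputable def Am (n : ℕ) (P : Finset (Finset (Fin n) × Fin n)) (hP : P ⊆ Eall n) :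
    (BIdx n → ℝ) →ₗ[ℝ] ({p // p ∈ P} → ℝ) :=
  (LinearMap.funLeft ℝ ℝ
    (fun p : {p // p ∈ P} => (⟨p.1, hP p.2⟩ : {p // p ∈ Eall n}))).comp (KB n)


/-- The matrix `A_m`, the restriction of `KB` to the rows indexed by `P`, is
invertible iff the complement `E \ P` is a spanning tree of the Boolean
lattice graph. -/
theorem Am_bijective_iff_spanning_tree (n : ℕ) (hn : 0 < n)
    (P : Finset (Finset (Fin n) × Fin n)) (hP : P ⊆ Eall n)
    (hcard : P.card = n * 2 ^ (n - 1) - (2 ^ n - 1)) :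
    Function.Bijective
      (fun (ξ : BIdx n → ℝ) (p : {p // p ∈ P}) =>
        Kop n (Bembed n ξ) p.1.1 p.1.2) ↔
      IsSpanningTree n (Eall n \ P) := by
  classical
  set T := Eall n \ P with hT
  have hTE : T ⊆ Eall n := Finset.sdiff_subset
  have hle := arith_le n hn
  have hcardT : T.card = 2 ^ n - 1 := by
    rw [hT, Finset.card_sdiff_of_subset hP, hcard, card_Eall n]
    omega
  have hfun : (fun (ξ : BIdx n → ℝ) (p : {p // p ∈ P}) => Kop n (Bembed n ξ) p.1.1 p.1.2)
      = fun ξ => Am n P hP ξ := rfl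
  rw [hfun]
  have hmemT : ∀ q : Finset (Fin n) × Fin n, q ∈ T ↔ (q ∈ Eall n ∧ q ∉ P) := by
    intro q; rw [hT, Finset.mem_sdiff]
  constructor
  · intro hbij
    refine ⟨?_, hcardT⟩
    by_contra hnc
    have hkg := finrank_ker_gradL_of_not_conn T hnc
    have h1 := rank_add_ker_div T
    have h2 := rank_add_ker_grad T
    rw [hcardT] at h1
    have hN : 1 ≤ 2 ^ n := Nat.one_le_two_pow
    have hkd : 0 < Module.finrank ℝ (LinearMap.ker ((inc n T).mulVecLin)) := by omega
    have hne : LinearMap.ker ((inc n T).mulVecLin) ≠ ⊥ := by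
      intro h
      rw [h, finrank_bot] at hkd
      omega
    obtain ⟨g, hgker, hgne⟩ := (Submodule.ne_bot_iff _).1 hne
    set G : Finset (Fin n) × Fin n → ℝ :=
      fun q => if h : q ∈ T then g ⟨q, h⟩ else 0 with hGdef
    have hGzero : ∀ q ∉ T, G q = 0 := fun q hq => dif_neg hq
    have hgG : (fun p : {p // p ∈ T} => G p.1) = g := by
      funext p
      simp [hGdef, p.2]
    have hdivG : (inc n (Eall n)).mulVec (fun p : {p // p ∈ Eall n} => G p.1) = 0 := by
      rw [← mulVec_inc_support T (Eall n) hTE G hGzero, hgG]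
      have := LinearMap.mem_ker.1 hgker
      rwa [Matrix.mulVecLin_apply] at this
    have hfW : (fun p : {p // p ∈ Eall n} => G p.1)
        ∈ LinearMap.ker ((inc n (Eall n)).mulVecLin) := by
      rw [LinearMap.mem_ker, Matrix.mulVecLin_apply]
      exact hdivG
    obtain ⟨ξ, hξ⟩ := KBW_surj n hn ⟨_, hfW⟩
    have hKBξ : KB n ξ = fun p : {p // p ∈ Eall n} => G p.1 := congrArg Subtype.val hξ
    have hξne : ξ ≠ 0 := by
      intro h0
      rw [h0, map_zero] at hKBξ
      apply hgne
      funext q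
      have h3 := congrFun hKBξ ⟨q.1, hTE q.2⟩
      simp only [Pi.zero_apply] at h3
      have h4 : G q.1 = g q := by
        rw [hGdef]
        simp [q.2]
      rw [h4] at h3
      exact h3.symm
    have hAmξ : Am n P hP ξ = 0 := by
      funext p
      show KB n ξ ⟨p.1, hP p.2⟩ = 0
      rw [hKBξ]
      refine hGzero p.1 (fun hpT => ?_)
      exact ((hmemT p.1).1 hpT).2 p.2
    exact hξne (hbij.1 (show Am n P hP ξ = Am n P hP 0 by rw [hAmξ, map_zero]))
  · intro hst
    obtain ⟨hconn, -⟩ := hst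
    have hkg := finrank_ker_gradL_of_conn T hconn
    have h1 := rank_add_ker_div T
    have h2 := rank_add_ker_grad T
    rw [hcardT] at h1
    rw [hkg] at h2
    have hN : 1 ≤ 2 ^ n := Nat.one_le_two_pow
    have hkd0 : Module.finrank ℝ (LinearMap.ker ((inc n T).mulVecLin)) = 0 := by omega
    have hkerT : LinearMap.ker ((inc n T).mulVecLin) = ⊥ :=
      Submodule.finrank_eq_zero.1 hkd0
    have hinj : Function.Injective (Am n P hP) := by
      rw [← LinearMap.ker_eq_bot, Submodule.eq_bot_iff]
      intro ξ hξ
      rw [LinearMap.mem_ker] at hξ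
      set G : Finset (Fin n) × Fin n → ℝ :=
        fun q => if h : q ∈ Eall n then KB n ξ ⟨q, h⟩ else 0 with hGdef
      have hfG : (fun p : {p // p ∈ Eall n} => G p.1) = KB n ξ := by
        funext p
        simp [hGdef, p.2]
      have hGP : ∀ q ∉ T, G q = 0 := by
        intro q hq
        by_cases hqE : q ∈ Eall n
        · have hqP : q ∈ P := by
            by_contra hqP
            exact hq ((hmemT q).2 ⟨hqE, hqP⟩)
          have h5 : KB n ξ ⟨q, hqE⟩ = Am n P hP ξ ⟨q, hqP⟩ := rfl
          rw [hGdef]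
          simp only [dif_pos hqE, h5, hξ, Pi.zero_apply]
        · exact dif_neg hqE
      have hgT : (inc n T).mulVec (fun p : {p // p ∈ T} => G p.1) = 0 := by
        rw [mulVec_inc_support T (Eall n) hTE G hGP, hfG]
        exact div_KB ξ
      have hg0 : (fun p : {p // p ∈ T} => G p.1) = 0 := by
        have hm : (fun p : {p // p ∈ T} => G p.1)
            ∈ LinearMap.ker ((inc n T).mulVecLin) := by
          rw [LinearMap.mem_ker, Matrix.mulVecLin_apply]
          exact hgT
        rw [hkerT] at hm
        exact hm
      have hKB0 : KB n ξ = 0 := by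
        funext p
        by_cases hpP : p.1 ∈ P
        · have h5 : KB n ξ p = Am n P hP ξ ⟨p.1, hpP⟩ := rfl
          rw [h5, hξ]
          rfl
        · have hpT : p.1 ∈ T := (hmemT p.1).2 ⟨p.2, hpP⟩
          have h6 := congrFun hg0 ⟨p.1, hpT⟩
          simp only [Pi.zero_apply] at h6
          rw [hGdef] at h6
          simp only [dif_pos p.2] at h6
          exact h6
      have hKBinj : Function.Injective (KB n) := by
        rw [← LinearMap.ker_eq_bot]
        exact KB_ker n
      exact hKBinj (by rw [hKB0, map_zero])
    refine ⟨hinj, ?_⟩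
    have hfr : Module.finrank ℝ (BIdx n → ℝ) = Module.finrank ℝ ({p // p ∈ P} → ℝ) := by
      rw [Module.finrank_pi, Module.finrank_pi, card_BIdx n hn, Fintype.card_coe, hcard]
    exact (LinearMap.injective_iff_surjective_of_finrank_eq_finrank hfr).1 hinj
end
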